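/- The pentagon-wheel graph (5 rim vertices forming a 5-cycle, each joined to a common axis vertex; 6 vertices and 10 edges total) is not a zero graph: its automorphism group is the dihedral group of order 10 acting on the rim, and every automorphism induces an even permutation of the 10 edges. -/

import Mathlib

/-- Adjacency of the `m`-wheel: axis `none` joined to every rim vertex `some i`,
rim vertices `some i` forming an `m`-cycle. -/
def wheelAdj (m : ℕ) : Option (Fin m) → Option (Fin m) → Prop
  | none, none => False
  | none, some _ => True
  | some _, none => True
  | some i, some j => i ≠ j ∧ (((j : ℕ) = ((i : ℕ) + 1) % m) ∨ ((i : ℕ) = ((j : ℕ) + 1) % m))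

instance wheelAdj.decidable (m : ℕ) : ∀ u v, Decidable (wheelAdj m u v) := fun u v => by
  cases u <;> cases v <;> dsimp [wheelAdj] <;> infer_instance

/-- The wheel graph with `m` rim vertices and one axis vertex. -/
def wheel (m : ℕ) : SimpleGraph (Option (Fin m)) where
  Adj := wheelAdj m
  symm := by
    constructor
    rintro (_|i) (_|j) h
    · exact h.elim
    · trivial
    · trivial
    · exact ⟨h.1.symm, h.2.symm⟩
  loopless := by
    constructor
    rintro (_|i) h
    · exact h.elim
    · exact h.1 rfl

instance (m : ℕ) : DecidableRel (wheel m).Adj := fun u v =>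
  inferInstanceAs (Decidable (wheelAdj m u v))


abbrev WAut := {f : Equiv.Perm (Option (Fin 5)) //
  ∀ a b, (wheel 5).Adj (f a) (f b) ↔ (wheel 5).Adj a b}

def toIso (s : WAut) : wheel 5 ≃g wheel 5 := ⟨s.1, s.2 _ _⟩

def E : (wheel 5 ≃g wheel 5) ≃ WAut where
  toFun φ := ⟨φ.toEquiv, fun _ _ => φ.map_rel_iff⟩
  invFun := toIso
  left_inv φ := by cases φ; rfl
  right_inv s := rfl

set_option maxRecDepth 10000 in
lemma waut_card : Fintype.card WAut = 10 := by decide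

set_option maxRecDepth 40000 in
lemma waut_sign : ∀ s : WAut,
    Equiv.Perm.sign (SimpleGraph.Iso.mapEdgeSet (toIso s)) = 1 := by decide

lemma all_sign_one (φ : wheel 5 ≃g wheel 5) :
    Equiv.Perm.sign (SimpleGraph.Iso.mapEdgeSet φ) = 1 := by
  have h := waut_sign (E φ)
  rwa [show toIso (E φ) = φ from E.left_inv φ] at h

/-- The pentagon-wheel graph (5 rim vertices in a cycle joined to a common
axis; 6 vertices, 10 edges) is not a zero graph: its automorphism group is the dihedral
group of order 10, and every automorphism induces an even permutation of the 10 edges,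
so no automorphism induces an odd one. -/
theorem pentagon_wheel_nonzero :
    Nat.card (wheel 5 ≃g wheel 5) = 10 ∧
    (∀ φ : wheel 5 ≃g wheel 5,
      Equiv.Perm.sign (SimpleGraph.Iso.mapEdgeSet φ) = 1) ∧
    ¬ ∃ φ : wheel 5 ≃g wheel 5,
      Equiv.Perm.sign (SimpleGraph.Iso.mapEdgeSet φ) = -1 := by
  refine ⟨?_, all_sign_one, ?_⟩
  · rw [Nat.card_congr E, Nat.card_eq_fintype_card, waut_card]
  · rintro ⟨φ, h⟩
    rw [all_sign_one φ] at h
    exact absurd h (by decide)
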